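/- (Minimum determinant of the Golden code) Let θ = (1+√5)/2 and θ̄ = (1−√5)/2 be real numbers viewed in ℂ, and set α = 1 + i − i·θ and ᾱ = 1 + i − i·θ̄. For all Gaussian integers a, b, c, d (elements of ℤ[i] viewed as complex numbers), not all zero, the matrix X = (1/√5)·[[α(a+bθ), α(c+dθ)], [i·ᾱ(c+dθ̄), ᾱ(a+bθ̄)]] satisfies |det(X)|^2 ≥ 1/5. In particular det(X) ≠ 0, i.e., the Golden code is fully diverse. -/

import Mathlib

open Matrix

namespace GoldenAux

def φ : GaussianInt →+* ZMod 5 := Zsqrtd.lift ⟨3, by decide⟩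

lemma phi_apply (z : GaussianInt) : φ z = (z.re : ZMod 5) + (z.im : ZMod 5) * 3 := rfl

lemma pi_dvd {z : GaussianInt} (h : φ z = 0) : (⟨2,1⟩ : GaussianInt) ∣ z := by
  rw [phi_apply] at h
  have h' : ((z.re + 3 * z.im : ℤ) : ZMod 5) = 0 := by push_cast; linear_combination h
  rw [ZMod.intCast_zmod_eq_zero_iff_dvd] at h'
  obtain ⟨k, hk⟩ := h'
  refine ⟨⟨2*k - z.im, z.im - k⟩, ?_⟩
  have h1 : z.re = 5*k - 3*z.im := by omega
  calc z = ⟨z.re, z.im⟩ := rfl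
    _ = ⟨2,1⟩ * ⟨2*k - z.im, z.im - k⟩ := by
        rw [Zsqrtd.ext_iff]
        simp [Zsqrtd.re_mul, Zsqrtd.im_mul]
        omega

lemma key5 : ∀ s t : ZMod 5, s^2 = 3*t^2 → s = 0 ∧ t = 0 := by decide

lemma natAbs_norm_pi_mul (z : GaussianInt) :
    ((⟨2,1⟩ : GaussianInt) * z).norm.natAbs = 5 * z.norm.natAbs := by
  rw [Zsqrtd.norm_mul, Int.natAbs_mul]
  norm_num [Zsqrtd.norm]

lemma descent : ∀ (n : ℕ) (x y u w : GaussianInt),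
    x.norm.natAbs + y.norm.natAbs + u.norm.natAbs + w.norm.natAbs = n →
    x^2 - 5*y^2 = ⟨0,1⟩ * (u^2 - 5*w^2) →
    x = 0 ∧ y = 0 ∧ u = 0 ∧ w = 0 := by
  intro n
  induction n using Nat.strong_induction_on with
  | _ n IH =>
    intro x y u w hn heq
    rcases Nat.eq_zero_or_pos n with h0 | hpos
    · subst h0
      have hx : x.norm = 0 := by omega
      have hy : y.norm = 0 := by omega
      have hu : u.norm = 0 := by omega
      have hw : w.norm = 0 := by omega
      refine ⟨?_, ?_, ?_, ?_⟩ <;>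
        rwa [Zsqrtd.norm_eq_zero_iff (by norm_num)] at *
    · -- step 1 : x, u divisible by π = 2+i
      have h5fac : (5:GaussianInt) = ⟨2,1⟩ * ⟨2,-1⟩ := by decide
      have hπ : (⟨2,1⟩ : GaussianInt) ≠ 0 := by decide
      have hphi5 : φ 5 = 0 := by decide
      have hphii : φ ⟨0,1⟩ = 3 := by decide
      have hphiπ : φ ⟨2,1⟩ = 0 := by decide
      have hphiπ' : φ (⟨2,-1⟩ : GaussianInt) = -1 := by decide
      have h1 := congrArg φ heq
      simp only [map_sub, _root_.map_mul, map_pow, hphi5, hphii] at h1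
      have h1' : φ x ^ 2 = 3 * φ u ^ 2 := by linear_combination h1
      obtain ⟨hx0, hu0⟩ := key5 _ _ h1'
      obtain ⟨x₁, hx⟩ := pi_dvd hx0
      obtain ⟨u₁, hu⟩ := pi_dvd hu0
      subst hx hu
      -- cancel π
      have heq2 : (⟨2,1⟩:GaussianInt) * x₁^2 - ⟨2,-1⟩*y^2 =
          ⟨0,1⟩ * ((⟨2,1⟩:GaussianInt) * u₁^2 - ⟨2,-1⟩*w^2) := by
        apply mul_left_cancel₀ hπ
        linear_combination heq + (y^2 - (⟨0,1⟩:GaussianInt)*w^2) * h5fac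
      -- step 2 : y, w divisible by π
      have h2 := congrArg φ heq2
      simp only [map_sub, _root_.map_mul, map_pow, hphii, hphiπ, hphiπ'] at h2
      have h2' : φ y ^ 2 = 3 * φ w ^ 2 := by linear_combination h2
      obtain ⟨hy0, hw0⟩ := key5 _ _ h2'
      obtain ⟨y₁, hy⟩ := pi_dvd hy0
      obtain ⟨w₁, hw⟩ := pi_dvd hw0
      subst hy hw
      have heq3 : x₁^2 - 5*y₁^2 = ⟨0,1⟩ * (u₁^2 - 5*w₁^2) := by
        apply mul_left_cancel₀ hπ
        linear_combination heq2 - (y₁^2 - (⟨0,1⟩:GaussianInt)*w₁^2) * (⟨2,1⟩:GaussianInt) * h5fac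
      -- measure decreases
      have hm : 5 * (x₁.norm.natAbs + y₁.norm.natAbs + u₁.norm.natAbs + w₁.norm.natAbs) = n := by
        rw [← hn]; simp only [natAbs_norm_pi_mul]; ring
      obtain ⟨e1, e2, e3, e4⟩ := IH _ (by omega) x₁ y₁ u₁ w₁ rfl heq3
      subst e1 e2 e3 e4
      simp

lemma golden_key (a b c d : GaussianInt)
    (h : a^2 + a*b - b^2 - ⟨0,1⟩ * (c^2 + c*d - d^2) = 0) :
    a = 0 ∧ b = 0 ∧ c = 0 ∧ d = 0 := by
  obtain ⟨e1, e2, e3, e4⟩ := descent _ (2*a+b) b (2*c+d) d rfl (by linear_combination 4*h)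
  have h2 : (2:GaussianInt) ≠ 0 := by decide
  refine ⟨?_, e2, ?_, e4⟩
  · have : 2*a = 0 := by rw [e2] at e1; linear_combination e1
    exact (mul_eq_zero.1 this).resolve_left h2
  · have : 2*c = 0 := by rw [e4] at e3; linear_combination e3
    exact (mul_eq_zero.1 this).resolve_left h2

end GoldenAux

/-- Minimum determinant of the Golden code. -/
theorem stmt_3 (a b c d : GaussianInt)
    (h : ¬(a = 0 ∧ b = 0 ∧ c = 0 ∧ d = 0)) :
    let θ : ℂ := (((1 + Real.sqrt 5) / 2 : ℝ) : ℂ)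
    let θbar : ℂ := (((1 - Real.sqrt 5) / 2 : ℝ) : ℂ)
    let α : ℂ := 1 + Complex.I - Complex.I * θ
    let αbar : ℂ := 1 + Complex.I - Complex.I * θbar
    let X : Matrix (Fin 2) (Fin 2) ℂ :=
      (1 / ((Real.sqrt 5 : ℝ) : ℂ)) •
        !![α * (GaussianInt.toComplex a + GaussianInt.toComplex b * θ),
           α * (GaussianInt.toComplex c + GaussianInt.toComplex d * θ);
           Complex.I * αbar * (GaussianInt.toComplex c + GaussianInt.toComplex d * θbar),
           αbar * (GaussianInt.toComplex a + GaussianInt.toComplex b * θbar)]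
    1 / 5 ≤ ‖X.det‖ ^ 2 ∧ X.det ≠ 0 := by
  intro θ θbar α αbar X
  set A := GaussianInt.toComplex a with hA
  set B := GaussianInt.toComplex b with hB
  set C := GaussianInt.toComplex c with hC
  set D := GaussianInt.toComplex d with hD
  have h5 : ((Real.sqrt 5 : ℝ) : ℂ)^2 = 5 := by
    norm_cast
    rw [Real.sq_sqrt] <;> norm_num
  have hbar : θbar = 1 - θ := by simp only [θ, θbar]; push_cast; ring
  have hθ2 : θ^2 = θ + 1 := by
    simp only [θ]; push_cast; linear_combination (1/4 : ℂ) * h5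
  have hαα : α * αbar = 2 + Complex.I := by
    simp only [α, αbar, hbar]
    linear_combination (θ - θ^2) * Complex.I_sq + hθ2
  have e1 : (A + B*θ) * (A + B*θbar) = A^2 + A*B - B^2 := by
    rw [hbar]; linear_combination (-B^2) * hθ2
  have e2 : (C + D*θ) * (C + D*θbar) = C^2 + C*D - D^2 := by
    rw [hbar]; linear_combination (-D^2) * hθ2
  -- the Gaussian integer whose image is the "integral part" of the determinant
  set Z : GaussianInt := a^2 + a*b - b^2 - ⟨0,1⟩ * (c^2 + c*d - d^2) with hZdef
  have hi : GaussianInt.toComplex ⟨0,1⟩ = Complex.I := by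
    simp [GaussianInt.toComplex_def]
  have hZc : GaussianInt.toComplex Z =
      (A^2 + A*B - B^2) - Complex.I * (C^2 + C*D - D^2) := by
    simp only [hZdef, map_sub, map_add, _root_.map_mul, map_pow, hi, hA, hB, hC, hD]
  have hdet : X.det = (2 + Complex.I)/5 * GaussianInt.toComplex Z := by
    have hX : X = (1 / ((Real.sqrt 5 : ℝ) : ℂ)) •
        !![α * (A + B * θ), α * (C + D * θ);
           Complex.I * αbar * (C + D * θbar), αbar * (A + B * θbar)] := rfl
    rw [hX, Matrix.det_smul, Matrix.det_fin_two_of, Fintype.card_fin, div_pow, one_pow, h5, hZc]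
    linear_combination (1/5 : ℂ) * ((A + B*θ)*(A + B*θbar) - Complex.I*(C + D*θ)*(C + D*θbar)) * hαα
      + (2 + Complex.I)/5 * e1 - (2 + Complex.I) * Complex.I / 5 * e2
  have hZ0 : Z ≠ 0 := by
    intro hz
    exact h (GoldenAux.golden_key a b c d (by rw [← hZdef]; linear_combination hz))
  have hZc0 : GaussianInt.toComplex Z ≠ 0 := by
    rwa [Ne, GaussianInt.toComplex_eq_zero]
  have h2I : (2 + Complex.I)/5 ≠ 0 := by
    refine div_ne_zero ?_ (by norm_num)
    intro hh
    have := congrArg Complex.im hh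
    simp at this
  constructor
  · rw [Complex.sq_norm, hdet, _root_.map_mul]
    have hnorm1 : Complex.normSq ((2 + Complex.I)/5) = 1/5 := by
      rw [map_div₀]
      simp [Complex.normSq_apply]
      norm_num
    rw [hnorm1, ← GaussianInt.intCast_real_norm]
    have hn1 : 1 ≤ Z.norm := by
      rcases (GaussianInt.norm_nonneg Z).lt_or_eq with hlt | heqz
      · omega
      · exact absurd ((Zsqrtd.norm_eq_zero_iff (by norm_num) Z).1 heqz.symm) hZ0
    have : (1:ℝ) ≤ (Z.norm : ℝ) := by exact_mod_cast hn1
    linarith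
  · rw [hdet]
    exact mul_ne_zero h2I hZc0
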